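/- Existence of a tiling at level 1: let τ = (Q, 𝒜) be a tile-set whose set of tilings 𝒯_τ is countable and infinite; then there exists a tiling c ∈ 𝒯_τ such that c is not periodic but every configuration y with y ≺ c is periodic. -/

import Mathlib

open Set

/-- A configuration assigns a state to each cell of the plane. -/
abbrev Config (Q : Type*) : Type _ := (ℤ × ℤ) → Q

/-- The shift by a vector `v`: `σ_v c = fun x => c (x + v)`. -/
def shiftC {Q : Type*} (v : ℤ × ℤ) (c : Config Q) : Config Q := fun x => c (x + v)

/-- The pattern `P` with (finite) domain `V` appears in `c` at translate `t`. -/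
def AppearsAt {Q : Type*} (c : Config Q) (V : Finset (ℤ × ℤ)) (P : (ℤ × ℤ) → Q)
    (t : ℤ × ℤ) : Prop :=
  ∀ x ∈ V, c (x + t) = P x

/-- The pattern `P` with (finite) domain `V` appears in `c`. -/
def Appears {Q : Type*} (c : Config Q) (V : Finset (ℤ × ℤ)) (P : (ℤ × ℤ) → Q) : Prop :=
  ∃ t : ℤ × ℤ, AppearsAt c V P t

/-- The pattern preorder: `x ≼ y` iff every pattern appearing in `x` appears in `y`. -/
def PatLe {Q : Type*} (x y : Config Q) : Prop :=
  ∀ (V : Finset (ℤ × ℤ)) (P : (ℤ × ℤ) → Q), Appears x V P → Appears y V P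

/-- A set of configurations is shift-invariant. -/
def ShiftInvariant {Q : Type*} (S : Set (Config Q)) : Prop :=
  ∀ c ∈ S, ∀ v : ℤ × ℤ, shiftC v c ∈ S

/-- `c` is an isolated point of `S` (in the subspace topology). -/
def IsolatedIn {Q : Type*} [TopologicalSpace Q] (S : Set (Config Q)) (c : Config Q) : Prop :=
  ∃ U : Set (Config Q), IsOpen U ∧ U ∩ S = {c}

/-- The topological derivative: the non-isolated points of `S`. -/
def derivSet {Q : Type*} [TopologicalSpace Q] (S : Set (Config Q)) : Set (Config Q) :=
  {c ∈ S | ¬ IsolatedIn S c}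

/-- Transfinite iteration of the topological derivative (Cantor–Bendixson). -/
noncomputable def CBIter {Q : Type*} [TopologicalSpace Q] (S : Set (Config Q))
    (o : Ordinal) : Set (Config Q) :=
  Ordinal.limitRecOn o S (fun _ ih => derivSet ih)
    (fun o _ ih => ⋂ (β : {β : Ordinal // β < o}), ih β.1 β.2)

/-- The Cantor–Bendixson rank of `c` in `S`: least `λ` with `c ∉ S^{(λ)}`. -/
noncomputable def CBRank {Q : Type*} [TopologicalSpace Q] (S : Set (Config Q))
    (c : Config Q) : Ordinal :=
  sInf {l : Ordinal | c ∉ CBIter S l}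

/-- A configuration is periodic iff its shift orbit is finite (equivalently, its
stabilizer has finite index in `ℤ²`). -/
def IsPeriodic {Q : Type*} (c : Config Q) : Prop :=
  (Set.range fun v : ℤ × ℤ => shiftC v c).Finite

/-- `c` is a tiling for the tile-set with domain `V` and allowed patterns `A`. -/
def IsTiling {Q : Type*} (V : Finset (ℤ × ℤ)) (A : Set ({x // x ∈ V} → Q))
    (c : Config Q) : Prop :=
  ∀ t : ℤ × ℤ, (fun y : {x // x ∈ V} => c (t + y.1)) ∈ A

/-- The set of tilings of a tile-set. -/
def Tilings {Q : Type*} (V : Finset (ℤ × ℤ)) (A : Set ({x // x ∈ V} → Q)) :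
    Set (Config Q) :=
  {c | IsTiling V A c}

section A
variable {Q : Type*}

lemma shiftC_shiftC (v w : ℤ × ℤ) (c : Config Q) :
    shiftC w (shiftC v c) = shiftC (v + w) c := by
  funext x; simp only [shiftC]; ring_nf

lemma shiftC_zero (c : Config Q) : shiftC 0 c = c := by
  funext x; simp [shiftC]

lemma continuous_shiftC [TopologicalSpace Q] (v : ℤ × ℤ) :
    Continuous (fun c : Config Q => shiftC v c) :=
  continuous_pi fun x => continuous_apply (x + v)

lemma shiftC_zsmul {v : ℤ × ℤ} {c : Config Q} (h : shiftC v c = c) (k : ℤ) :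
    shiftC (k • v) c = c := by
  induction k using Int.induction_on with
  | zero => simpa using shiftC_zero c
  | succ k ih =>
      have : ((k : ℤ) + 1) • v = (k : ℤ) • v + v := by
        rw [add_smul, one_smul]
      rw [this, ← shiftC_shiftC, ih, h]
  | pred k ih =>
      have : (-(k : ℤ) - 1) • v = (-(k : ℤ)) • v + (-v) := by
        rw [sub_smul, one_smul, neg_smul]; ring_nf
      have hneg : shiftC (-v) c = c := by
        have := shiftC_shiftC v (-v) c
        rw [h] at this
        simpa [shiftC_zero] using this
      rw [this, ← shiftC_shiftC, ih, hneg]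
end A

section B
variable {Q : Type*}

/-- reduction modulo periods -/
lemma periodic_reduce {q : ℤ} (hq : 0 < q) {c : Config Q}
    (h1 : shiftC ((q, 0) : ℤ × ℤ) c = c) (h2 : shiftC ((0, q) : ℤ × ℤ) c = c)
    (a b : ℤ) : c (a, b) = c (a % q, b % q) := by
  have hh : shiftC ((a / q) • ((q, 0) : ℤ × ℤ)) c = c := shiftC_zsmul h1 _
  have hv : shiftC ((b / q) • ((0, q) : ℤ × ℤ)) c = c := shiftC_zsmul h2 _
  have hcomb : shiftC ((q * (a / q), q * (b / q)) : ℤ × ℤ) c = c := by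
    have := shiftC_shiftC ((a / q) • ((q, 0) : ℤ × ℤ)) ((b / q) • ((0, q) : ℤ × ℤ)) c
    rw [hh] at this
    rw [hv] at this
    have hsum : ((a / q) • ((q, 0) : ℤ × ℤ)) + ((b / q) • ((0, q) : ℤ × ℤ))
        = ((q * (a / q), q * (b / q)) : ℤ × ℤ) := by
      simp [Prod.ext_iff, smul_eq_mul, mul_comm]
    rw [hsum] at this
    exact this.symm
  have := congrFun hcomb ((a % q, b % q) : ℤ × ℤ)
  simp only [shiftC] at this
  have hx : ((a % q, b % q) : ℤ × ℤ) + (q * (a / q), q * (b / q)) = (a, b) := by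
    simp [Prod.ext_iff, Int.emod_add_mul_ediv]
  rw [hx] at this
  exact this

/-- configurations with two given periods form a finite set -/
lemma finite_Pq [Fintype Q] {q : ℤ} (hq : 0 < q) :
    {c : Config Q | shiftC ((q, 0) : ℤ × ℤ) c = c ∧ shiftC ((0, q) : ℤ × ℤ) c = c}.Finite := by
  set B : Set (ℤ × ℤ) := (Set.Icc 0 (q - 1)) ×ˢ (Set.Icc 0 (q - 1)) with hB
  have hBfin : B.Finite := (Set.finite_Icc _ _).prod (Set.finite_Icc _ _)
  haveI := hBfin.to_subtype
  have : Finite (B → Q) := by infer_instance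
  set f : Config Q → (B → Q) := fun c => (fun x => c x.1) with hf
  apply Set.Finite.of_finite_image (f := f) (Set.toFinite _)
  intro c1 hc1 c2 hc2 heq
  funext x
  obtain ⟨a, b⟩ := x
  have h1 := periodic_reduce hq hc1.1 hc1.2 a b
  have h2 := periodic_reduce hq hc2.1 hc2.2 a b
  have hmem : ((a % q, b % q) : ℤ × ℤ) ∈ B := by
    constructor <;> constructor
    · exact Int.emod_nonneg a (ne_of_gt hq)
    · exact Int.lt_iff_add_one_le.mp (Int.emod_lt_of_pos a hq) |>.trans_eq (by ring) |> (by omega : a % q + 1 ≤ q → a % q ≤ q - 1)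
    · exact Int.emod_nonneg b (ne_of_gt hq)
    · have := Int.emod_lt_of_pos b hq; omega
  have := congrFun heq ⟨_, hmem⟩
  simp only [f] at this
  rw [h1, h2, this]
end B

section C
variable {Q : Type*}

lemma isPeriodic_of_two_periods [Fintype Q] {q : ℤ} (hq : 0 < q) {c : Config Q}
    (h1 : shiftC ((q, 0) : ℤ × ℤ) c = c) (h2 : shiftC ((0, q) : ℤ × ℤ) c = c) :
    IsPeriodic c := by
  apply (finite_Pq hq).subset
  rintro _ ⟨v, rfl⟩
  constructor
  · rw [shiftC_shiftC, add_comm, ← shiftC_shiftC, h1]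
  · rw [shiftC_shiftC, add_comm, ← shiftC_shiftC, h2]

/-- a finite shift-invariant set has a common period -/
lemma common_period [Fintype Q] {Z : Set (Config Q)}
    (hfin : Z.Finite) (hinv : ∀ c ∈ Z, ∀ v : ℤ × ℤ, shiftC v c ∈ Z) :
    ∃ q : ℤ, 0 < q ∧ ∀ p ∈ Z, shiftC ((q, 0) : ℤ × ℤ) p = p ∧ shiftC ((0, q) : ℤ × ℤ) p = p := by
  haveI := hfin.to_subtype
  -- horizontal
  have key : ∀ w : ℤ × ℤ, ∃ q : ℤ, 0 < q ∧ ∀ p ∈ Z, shiftC (q • w) p = p := by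
    intro w
    set f : ℕ → (Z → Z) := fun n p => ⟨shiftC ((n : ℤ) • w) p.1, hinv p.1 p.2 _⟩ with hf
    obtain ⟨m, n, hmn, heq⟩ := Finite.exists_ne_map_eq_of_infinite f
    rcases Ne.lt_or_gt hmn with h | h
    · refine ⟨(n : ℤ) - m, by omega, fun p hp => ?_⟩
      have := congrFun heq ⟨p, hp⟩
      have heq2 : shiftC ((m : ℤ) • w) p = shiftC ((n : ℤ) • w) p := by
        simpa [f, Subtype.ext_iff] using this
      have := congrArg (shiftC ((-(m : ℤ)) • w)) heq2
      rw [shiftC_shiftC, shiftC_shiftC, ← add_smul, ← add_smul] at this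
      simp only [add_neg_cancel, zero_smul, shiftC_zero] at this
      have harith : ((m : ℤ) + -(m : ℤ)) = 0 := by ring
      have : p = shiftC (((n : ℤ) - m) • w) p := by
        simpa [sub_eq_add_neg, add_comm] using this
      exact this.symm
    · refine ⟨(m : ℤ) - n, by omega, fun p hp => ?_⟩
      have := congrFun heq ⟨p, hp⟩
      have heq2 : shiftC ((m : ℤ) • w) p = shiftC ((n : ℤ) • w) p := by
        simpa [f, Subtype.ext_iff] using this
      have := congrArg (shiftC ((-(n : ℤ)) • w)) heq2.symm
      rw [shiftC_shiftC, shiftC_shiftC, ← add_smul, ← add_smul] at this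
      simp only [add_neg_cancel, zero_smul, shiftC_zero] at this
      have : p = shiftC (((m : ℤ) - n) • w) p := by
        simpa [sub_eq_add_neg, add_comm] using this
      exact this.symm
  obtain ⟨q1, hq1, h1⟩ := key ((1, 0) : ℤ × ℤ)
  obtain ⟨q2, hq2, h2⟩ := key ((0, 1) : ℤ × ℤ)
  refine ⟨q1 * q2, mul_pos hq1 hq2, fun p hp => ?_⟩
  constructor
  · have := shiftC_zsmul (h1 p hp) q2
    rw [← smul_assoc] at this
    have harith : (q1 * q2) • ((1, 0) : ℤ × ℤ) = ((q1 * q2, 0) : ℤ × ℤ) := by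
      simp [Prod.ext_iff]
    rw [smul_eq_mul, mul_comm q2 q1, harith] at this
    exact this
  · have := shiftC_zsmul (h2 p hp) q1
    rw [← smul_assoc] at this
    have harith : (q1 * q2) • ((0, 1) : ℤ × ℤ) = ((0, q1 * q2) : ℤ × ℤ) := by
      simp [Prod.ext_iff]
    rw [smul_eq_mul, harith] at this
    exact this
end C

section D
variable {Q : Type*} [TopologicalSpace Q] [DiscreteTopology Q]

lemma patLe_shift (c : Config Q) (v : ℤ × ℤ) : PatLe c (shiftC v c) := by
  rintro W P ⟨t, ht⟩
  refine ⟨t - v, fun x hx => ?_⟩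
  simp only [shiftC]
  rw [show x + (t - v) + v = x + t by ring]
  exact ht x hx

lemma mem_closure_orbit_of_patLe {y c : Config Q} (h : PatLe y c) :
    y ∈ closure (Set.range fun v : ℤ × ℤ => shiftC v c) := by
  rw [mem_closure_iff]
  intro W hW hyW
  obtain ⟨I, u, hu, hsub⟩ := isOpen_pi_iff.mp hW y hyW
  have happ : Appears y I y := ⟨0, fun x _ => by simp⟩
  obtain ⟨t, ht⟩ := h I y happ
  refine ⟨shiftC t c, ?_, ⟨t, rfl⟩⟩
  apply hsub
  intro i hi
  simp only [shiftC]
  rw [ht i hi]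
  exact (hu i hi).2

lemma compact_isolated_finite {S : Set (Config Q)} (hS : IsCompact S)
    (h : ∀ x ∈ S, IsolatedIn S x) : S.Finite := by
  choose U hUopen hUinter using h
  obtain ⟨t, ht⟩ := hS.elim_finite_subcover (fun x : S => U x.1 x.2)
    (fun x => hUopen x.1 x.2) (fun x hx => Set.mem_iUnion.mpr ⟨⟨x, hx⟩, by
      have hm : x ∈ U x hx ∩ S := by rw [hUinter x hx]; rfl
      exact hm.1⟩)
  apply Set.Finite.subset (Set.Finite.image (fun i : S => i.1) t.finite_toSet)
  intro x hx
  obtain ⟨i, hit, hxU⟩ := Set.mem_iUnion₂.mp (ht hx)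
  have : x ∈ U i.1 i.2 ∩ S := ⟨hxU, hx⟩
  rw [hUinter i.1 i.2] at this
  exact ⟨i, hit, this.symm⟩

lemma shiftInvariant_derivSet {S : Set (Config Q)}
    (hinv : ∀ c ∈ S, ∀ v : ℤ × ℤ, shiftC v c ∈ S) :
    ∀ c ∈ derivSet S, ∀ v : ℤ × ℤ, shiftC v c ∈ derivSet S := by
  rintro c ⟨hcS, hciso⟩ v
  refine ⟨hinv c hcS v, ?_⟩
  rintro ⟨U, hUopen, hUinter⟩
  apply hciso
  refine ⟨(fun d => shiftC v d) ⁻¹' U, (continuous_shiftC v).isOpen_preimage U hUopen, ?_⟩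
  apply Set.Subset.antisymm
  · rintro z ⟨hzU, hzS⟩
    have : shiftC v z ∈ U ∩ S := ⟨hzU, hinv z hzS v⟩
    rw [hUinter] at this
    have hzc : shiftC v z = shiftC v c := this
    have : z = c := by
      have := congrArg (shiftC (-v)) hzc
      rwa [shiftC_shiftC, shiftC_shiftC, add_neg_cancel, shiftC_zero, shiftC_zero] at this
    exact this ▸ rfl
  · rintro z hz
    have hzc : z = c := hz
    subst hzc
    constructor
    · show shiftC v z ∈ U
      have : shiftC v z ∈ U ∩ S := by rw [hUinter]; rfl
      exact this.1
    · exact hcS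
end D

section E
variable {Q : Type*} [Fintype Q] [TopologicalSpace Q] [DiscreteTopology Q]

lemma isClosed_derivSet {S : Set (Config Q)} (hcl : IsClosed S) :
    IsClosed (derivSet S) := by
  classical
  set W : Set (Config Q) := ⋃ x : {x : Config Q // IsolatedIn S x}, x.2.choose with hW
  have hWopen : IsOpen W := isOpen_iUnion fun x => x.2.choose_spec.1
  have hkey : derivSet S = S ∩ Wᶜ := by
    ext c
    constructor
    · rintro ⟨hcS, hciso⟩
      refine ⟨hcS, fun hcW => ?_⟩
      obtain ⟨x, hcx⟩ := Set.mem_iUnion.mp hcW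
      have hm : c ∈ x.2.choose ∩ S := ⟨hcx, hcS⟩
      rw [x.2.choose_spec.2] at hm
      have hcx1 : c = x.1 := hm
      exact hciso (by rw [hcx1]; exact x.2)
    · rintro ⟨hcS, hcW⟩
      refine ⟨hcS, fun hiso => hcW ?_⟩
      apply Set.mem_iUnion.mpr
      refine ⟨⟨c, hiso⟩, ?_⟩
      have hm : c ∈ (⟨c, hiso⟩ : {x : Config Q // IsolatedIn S x}).2.choose ∩ S := by
        rw [(⟨c, hiso⟩ : {x : Config Q // IsolatedIn S x}).2.choose_spec.2]; rfl
      exact hm.1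
  rw [hkey]
  exact hcl.inter hWopen.isClosed_compl

lemma exists_isolatedIn {S : Set (Config Q)} (hcl : IsClosed S) (hct : S.Countable)
    (hne : S.Nonempty) : ∃ x ∈ S, IsolatedIn S x := by
  haveI : CompactSpace (Config Q) := by infer_instance
  haveI : Countable ↥S := hct.to_subtype
  haveI : Nonempty ↥S := hne.to_subtype
  haveI : CompactSpace ↥S := isCompact_iff_compactSpace.mp hcl.isCompact
  haveI : BaireSpace ↥S := BaireSpace.of_t2Space_locallyCompactSpace
  obtain ⟨i, hi⟩ := nonempty_interior_of_iUnion_of_closed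
    (f := fun i : ↥S => ({i} : Set ↥S)) (fun i => isClosed_singleton)
    (by simpa using Set.iUnion_of_singleton ↥S)
  have hint : interior ({i} : Set ↥S) = {i} := by
    apply Set.Subset.antisymm interior_subset
    obtain ⟨z, hz⟩ := hi
    have hzi : z ∈ ({i} : Set ↥S) := interior_subset hz
    have hzi' : z = i := hzi
    subst hzi'
    intro w hw
    have hwz : w = z := hw
    subst hwz
    exact hz
  have hopen : IsOpen ({i} : Set ↥S) := by
    rw [← hint]; exact isOpen_interior
  obtain ⟨U, hUo, hU⟩ := isOpen_induced_iff.mp hopen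
  refine ⟨i.1, i.2, U, hUo, ?_⟩
  apply Set.Subset.antisymm
  · rintro z ⟨hzU, hzS⟩
    have : (⟨z, hzS⟩ : ↥S) ∈ Subtype.val ⁻¹' U := hzU
    rw [hU] at this
    have : (⟨z, hzS⟩ : ↥S) = i := this
    exact congrArg Subtype.val this ▸ rfl
  · intro z hz
    have hzi : z = i.1 := hz
    subst hzi
    have : i ∈ Subtype.val ⁻¹' U := by rw [hU]; rfl
    exact ⟨this, i.2⟩

end E

section Main
variable {Q : Type*} [Fintype Q] [TopologicalSpace Q] [DiscreteTopology Q]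

lemma isOpen_perTest (q : ℤ) :
    IsOpen {d : Config Q | d ((q, 0) : ℤ × ℤ) = d 0 ∧ d ((0, q) : ℤ × ℤ) = d 0} := by
  have hc : Continuous (fun d : Config Q => (d ((q, 0) : ℤ × ℤ), d ((0, q) : ℤ × ℤ), d 0)) :=
    (continuous_apply _).prodMk ((continuous_apply _).prodMk (continuous_apply _))
  have : {d : Config Q | d ((q, 0) : ℤ × ℤ) = d 0 ∧ d ((0, q) : ℤ × ℤ) = d 0}
      = (fun d : Config Q => (d ((q, 0) : ℤ × ℤ), d ((0, q) : ℤ × ℤ), d 0)) ⁻¹'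
        {y : Q × Q × Q | y.1 = y.2.2 ∧ y.2.1 = y.2.2} := rfl
  rw [this]
  exact hc.isOpen_preimage _ (isOpen_discrete _)

lemma mem_perTest_of_periodic {q : ℤ} {p : Config Q}
    (h1 : shiftC ((q, 0) : ℤ × ℤ) p = p) (h2 : shiftC ((0, q) : ℤ × ℤ) p = p) :
    p ∈ {d : Config Q | d ((q, 0) : ℤ × ℤ) = d 0 ∧ d ((0, q) : ℤ × ℤ) = d 0} := by
  constructor
  · have := congrFun h1 (0 : ℤ × ℤ)
    simpa [shiftC] using this
  · have := congrFun h2 (0 : ℤ × ℤ)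
    simpa [shiftC] using this

lemma periodic_of_shifts_in_perTest {q : ℤ} {d : Config Q}
    (h : ∀ t : ℤ × ℤ, shiftC t d ∈
      {d : Config Q | d ((q, 0) : ℤ × ℤ) = d 0 ∧ d ((0, q) : ℤ × ℤ) = d 0}) :
    shiftC ((q, 0) : ℤ × ℤ) d = d ∧ shiftC ((0, q) : ℤ × ℤ) d = d := by
  constructor
  · funext x
    have := (h x).1
    simpa [shiftC, add_comm] using this
  · funext x
    have := (h x).2
    simpa [shiftC, add_comm] using this

end Main

/-- A tile-set with countably infinitely many tilings has a
tiling at level 1: not periodic, but everything strictly below it is periodic. -/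
theorem stmt18 {Q : Type*} [Fintype Q] [Nonempty Q] [TopologicalSpace Q] [DiscreteTopology Q]
    (V : Finset (ℤ × ℤ)) (A : Set ({x // x ∈ V} → Q))
    (hcount : (Tilings V A : Set (Config Q)).Countable)
    (hinf : (Tilings V A : Set (Config Q)).Infinite) :
    ∃ c ∈ (Tilings V A : Set (Config Q)), ¬ IsPeriodic c ∧
      ∀ y : Config Q, PatLe y c → ¬ PatLe c y → IsPeriodic y := by
  classical
  haveI : CompactSpace (Config Q) := inferInstance
  set T := (Tilings V A : Set (Config Q)) with hTdef
  -- T is closed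
  have hTclosed : IsClosed T := by
    have hrepr : T = ⋂ t : ℤ × ℤ,
        (fun c : Config Q => (fun y : {x // x ∈ V} => c (t + y.1))) ⁻¹' A := by
      ext c
      simp only [Set.mem_iInter, Set.mem_preimage]
      rfl
    rw [hrepr]
    exact isClosed_iInter fun t =>
      IsClosed.preimage (continuous_pi fun y => continuous_apply (t + y.1))
        (isClosed_discrete A)
  -- T is shift-invariant
  have hTinv : ShiftInvariant T := by
    intro c hc v t
    have heq : (fun y : {x // x ∈ V} => shiftC v c (t + y.1))
        = fun y : {x // x ∈ V} => c ((t + v) + y.1) := by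
      funext y
      show c (t + y.1 + v) = c (t + v + y.1)
      exact congrArg c (by ring)
    rw [heq]
    exact hc (t + v)
  -- Zorn's lemma on infinite subshifts of T
  set 𝒢 : Set (Set (Config Q)) :=
    {S | S ⊆ T ∧ IsClosed S ∧ ShiftInvariant S ∧ S.Infinite} with h𝒢
  have hT𝒢 : T ∈ 𝒢 := ⟨Set.Subset.rfl, hTclosed, hTinv, hinf⟩
  have hchainlb : ∀ ch ⊆ 𝒢, IsChain (· ⊆ ·) ch → ch.Nonempty →
      ∃ lb ∈ 𝒢, ∀ s ∈ ch, lb ⊆ s := by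
    intro ch hch hchain hne
    haveI : Nonempty ↥ch := hne.to_subtype
    refine ⟨⋂₀ ch, ⟨?_, ?_, ?_, ?_⟩, fun s hs => Set.sInter_subset_of_mem hs⟩
    · obtain ⟨s0, hs0⟩ := hne
      exact (Set.sInter_subset_of_mem hs0).trans (hch hs0).1
    · exact isClosed_sInter fun s hs => (hch hs).2.1
    · intro c hc v
      rw [Set.mem_sInter] at hc ⊢
      exact fun s hs => (hch hs).2.2.1 c (hc s hs) v
    · -- the intersection of a chain of infinite subshifts is infinite
      intro hfin
      have hZfin : (⋂₀ ch).Finite := hfin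
      have hZinv : ∀ c ∈ ⋂₀ ch, ∀ v : ℤ × ℤ, shiftC v c ∈ ⋂₀ ch := by
        intro c hc v
        rw [Set.mem_sInter] at hc ⊢
        exact fun s hs => (hch hs).2.2.1 c (hc s hs) v
      obtain ⟨q, hq, hqper⟩ := common_period hZfin hZinv
      set U := {d : Config Q | d ((q, 0) : ℤ × ℤ) = d 0 ∧ d ((0, q) : ℤ × ℤ) = d 0} with hU
      have hUopen : IsOpen U := isOpen_perTest q
      have hZU : ⋂₀ ch ⊆ U := fun p hp =>
        mem_perTest_of_periodic (hqper p hp).1 (hqper p hp).2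
      have hdir : Directed (· ⊇ ·) (fun s : ↥ch => s.1 \ U) := by
        intro a b
        rcases hchain.total a.2 b.2 with h | h
        · exact ⟨a, Set.Subset.rfl, Set.diff_subset_diff_left h⟩
        · exact ⟨b, Set.diff_subset_diff_left h, Set.Subset.rfl⟩
      have hnot : ¬ ∀ s : ↥ch, (s.1 \ U).Nonempty := by
        intro hall
        obtain ⟨x, hx⟩ := IsCompact.nonempty_iInter_of_directed_nonempty_isCompact_isClosed
          (fun s : ↥ch => s.1 \ U) hdir hall
          (fun s => ((hch s.2).2.1.sdiff hUopen).isCompact)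
          (fun s => (hch s.2).2.1.sdiff hUopen)
        rw [Set.mem_iInter] at hx
        have hxZ : x ∈ ⋂₀ ch := by
          rw [Set.mem_sInter]
          exact fun s hs => (hx ⟨s, hs⟩).1
        exact (hx (Classical.arbitrary _)).2 (hZU hxZ)
      push_neg at hnot
      obtain ⟨s, hsU⟩ := hnot
      rw [Set.diff_eq_empty] at hsU
      have hsPq : s.1 ⊆ {c : Config Q |
          shiftC ((q, 0) : ℤ × ℤ) c = c ∧ shiftC ((0, q) : ℤ × ℤ) c = c} := by
        intro d hd
        exact periodic_of_shifts_in_perTest fun t => hsU ((hch s.2).2.2.1 d hd t)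
      exact (hch s.2).2.2.2 ((finite_Pq hq).subset hsPq)
  obtain ⟨G, hGsubT, hGmin⟩ := zorn_superset_nonempty 𝒢 hchainlb T hT𝒢
  obtain ⟨hGT, hGcl, hGinv, hGinf⟩ := hGmin.1
  -- the derived set of G is finite
  have hFfin : (derivSet G).Finite := by
    by_contra hFinf
    have hF𝒢 : derivSet G ∈ 𝒢 :=
      ⟨(fun x hx => hGT hx.1), isClosed_derivSet hGcl,
        shiftInvariant_derivSet hGinv, hFinf⟩
    have hFG : G ⊆ derivSet G := hGmin.2 hF𝒢 (fun x hx => hx.1)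
    obtain ⟨x, hxG, hxiso⟩ := exists_isolatedIn hGcl (hcount.mono hGT) hGinf.nonempty
    exact (hFG hxG).2 hxiso
  -- G contains a non-periodic configuration
  have hex : ∃ c ∈ G, ¬ IsPeriodic c := by
    by_contra hall
    push_neg at hall
    have hFinv : ∀ c ∈ derivSet G, ∀ v : ℤ × ℤ, shiftC v c ∈ derivSet G :=
      shiftInvariant_derivSet hGinv
    obtain ⟨q, hq, hqper⟩ := common_period hFfin hFinv
    set U := {d : Config Q | d ((q, 0) : ℤ × ℤ) = d 0 ∧ d ((0, q) : ℤ × ℤ) = d 0} with hU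
    have hUopen : IsOpen U := isOpen_perTest q
    have hFU : derivSet G ⊆ U := fun p hp =>
      mem_perTest_of_periodic (hqper p hp).1 (hqper p hp).2
    set E := G \ U with hE
    have hEcl : IsClosed E := hGcl.sdiff hUopen
    have hEiso : ∀ x ∈ E, IsolatedIn E x := by
      intro x hx
      have hxG : x ∈ G := hx.1
      have hxF : x ∉ derivSet G := fun hF => hx.2 (hFU hF)
      have hiso : IsolatedIn G x := by
        by_contra h
        exact hxF ⟨hxG, h⟩
      obtain ⟨W, hWo, hWG⟩ := hiso
      refine ⟨W, hWo, Set.Subset.antisymm ?_ ?_⟩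
      · rintro z ⟨hzW, hzE⟩
        have : z ∈ W ∩ G := ⟨hzW, hzE.1⟩
        rw [hWG] at this
        exact this
      · intro z hz
        have hzx : z = x := hz
        subst hzx
        have hxW : z ∈ W := by
          have : z ∈ W ∩ G := by rw [hWG]; rfl
          exact this.1
        exact ⟨hxW, hx⟩
    have hEfin : E.Finite := compact_isolated_finite hEcl.isCompact hEiso
    have hGsub : G ⊆ {c : Config Q |
          shiftC ((q, 0) : ℤ × ℤ) c = c ∧ shiftC ((0, q) : ℤ × ℤ) c = c}
        ∪ ⋃ e ∈ E, Set.range (fun v : ℤ × ℤ => shiftC v e) := by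
      intro d hd
      by_cases hcase : ∃ t : ℤ × ℤ, shiftC t d ∈ E
      · right
        obtain ⟨t, ht⟩ := hcase
        apply Set.mem_biUnion ht
        refine ⟨-t, ?_⟩
        show shiftC (-t) (shiftC t d) = d
        rw [shiftC_shiftC, add_neg_cancel, shiftC_zero]
      · left
        push_neg at hcase
        apply periodic_of_shifts_in_perTest
        intro t
        have : shiftC t d ∈ G := hGinv d hd t
        by_contra hnotU
        exact hcase t ⟨this, hnotU⟩
    have hGfin : G.Finite := by
      refine Set.Finite.subset (Set.Finite.union (finite_Pq hq) ?_) hGsub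
      exact hEfin.biUnion fun e he => hall e he.1
    exact hGinf hGfin
  obtain ⟨c, hcG, hcnp⟩ := hex
  refine ⟨c, hGT hcG, hcnp, ?_⟩
  intro y hyc hcy
  have horb : (Set.range fun v : ℤ × ℤ => shiftC v c) ⊆ G := by
    rintro z ⟨v, rfl⟩
    exact hGinv c hcG v
  have hycl : y ∈ closure (Set.range fun v : ℤ × ℤ => shiftC v c) :=
    mem_closure_orbit_of_patLe hyc
  have hyG : y ∈ G := (hGcl.closure_subset_iff.mpr horb) hycl
  have hyF : y ∈ derivSet G := by
    refine ⟨hyG, ?_⟩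
    rintro ⟨W, hWo, hWG⟩
    have hyW : y ∈ W := by
      have : y ∈ W ∩ G := by rw [hWG]; rfl
      exact this.1
    obtain ⟨z, hz⟩ := (mem_closure_iff.mp hycl) W hWo hyW
    have hzy : z = y := by
      have : z ∈ W ∩ G := ⟨hz.1, horb hz.2⟩
      rw [hWG] at this
      exact this
    obtain ⟨v, hv⟩ := hz.2
    apply hcy
    rw [← hzy, ← hv]
    exact patLe_shift c v
  apply hFfin.subset
  rintro z ⟨v, rfl⟩
  exact shiftInvariant_derivSet hGinv y hyF v
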